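/- Let a = (a_0, a_1, a_2, a_3) ∈ ℝ⁴ with a_0 = 1. Then λ_a(y,x) ≥ 0 for all y ∈ {0,1,2,3} and all x ∈ ℝ if and only if a_1 = 0, a_3 = 0 and 0 ≤ a_2 ≤ 2/3. -/

import Mathlib

/-- The probabilists' Hermite polynomials over `ℝ`:
`h_0 = 1`, `h_{n+1}(x) = x h_n(x) - h_n'(x)`. -/
noncomputable def hermiteR : ℕ → Polynomial ℝ
  | 0 => 1
  | n + 1 => Polynomial.X * hermiteR n - Polynomial.derivative (hermiteR n)

/-- `λ_a(y,x) = ∑_{n=0}^{min(y,N)} (a_n / n!) C(y,n) h_n(x)`. -/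
noncomputable def lambdaA (N : ℕ) (a : ℕ → ℝ) (y : ℕ) (x : ℝ) : ℝ :=
  ∑ n ∈ Finset.range (min y N + 1), (a n / (n.factorial : ℝ)) * (y.choose n : ℝ) * (hermiteR n).eval x

lemma lambdaA_one (a : ℕ → ℝ) (x : ℝ) :
    lambdaA 3 a 1 x = a 0 + a 1 * x := by
  simp [lambdaA, Finset.sum_range_succ, hermiteR, Nat.factorial]

lemma lambdaA_two (a : ℕ → ℝ) (x : ℝ) :
    lambdaA 3 a 2 x = a 0 + 2 * a 1 * x + a 2 / 2 * (x ^ 2 - 1) := by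
  simp [lambdaA, Finset.sum_range_succ, hermiteR, Nat.factorial]
  ring

lemma lambdaA_three (a : ℕ → ℝ) (x : ℝ) :
    lambdaA 3 a 3 x = a 0 + 3 * a 1 * x + a 2 / 2 * 3 * (x ^ 2 - 1)
      + a 3 / 6 * (x ^ 3 - 3 * x) := by
  simp [lambdaA, Finset.sum_range_succ, hermiteR, Nat.factorial]
  ring

/-- Characterization of `A_3`: for `a = (1, a_1, a_2, a_3)`, one has `λ_a(y,x) ≥ 0` for all
`y ∈ {0,1,2,3}` and `x ∈ ℝ` if and only if `a_1 = 0`, `a_3 = 0` and `0 ≤ a_2 ≤ 2/3`. -/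
theorem lambdaA_three_characterization (a : ℕ → ℝ) (ha0 : a 0 = 1) :
    (∀ y, y ≤ 3 → ∀ x : ℝ, 0 ≤ lambdaA 3 a y x) ↔
      (a 1 = 0 ∧ a 3 = 0 ∧ 0 ≤ a 2 ∧ a 2 ≤ 2 / 3) := by
  constructor
  · intro h
    -- a 1 = 0
    have ha1 : a 1 = 0 := by
      by_contra h1
      have hv := h 1 (by norm_num) (-2 / a 1)
      rw [lambdaA_one, ha0] at hv
      have : a 1 * (-2 / a 1) = -2 := by field_simp
      linarith
    have h3 : ∀ x : ℝ, 0 ≤ 1 + a 2 / 2 * 3 * (x ^ 2 - 1) + a 3 / 6 * (x ^ 3 - 3 * x) := by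
      intro x
      have := h 3 (le_refl 3) x
      rw [lambdaA_three, ha0, ha1] at this
      linarith
    -- a 2 ≤ 2/3
    have ha2u : a 2 ≤ 2 / 3 := by
      have := h3 0
      nlinarith
    -- 0 ≤ a 2
    have ha2l : 0 ≤ a 2 := by
      by_contra h2
      push_neg at h2
      have h32 : 3 * a 2 < 0 := by linarith
      have h32' : 3 * a 2 ≠ 0 := ne_of_lt h32
      obtain ⟨s, hsdef⟩ : ∃ s : ℝ, s = -2 / (3 * a 2) := ⟨_, rfl⟩
      have hs : 0 < s := hsdef ▸ div_pos_of_neg_of_neg (by norm_num) h32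
      obtain ⟨t, ht⟩ : ∃ t : ℝ, t = 1 + s := ⟨_, rfl⟩
      have h1 := h3 t
      have h2' := h3 (-t)
      have e1 : (-t) ^ 2 = t ^ 2 := by ring
      have e2 : (-t) ^ 3 = -t ^ 3 := by ring
      rw [e1, e2] at h2'
      have key : 0 ≤ 2 + 3 * a 2 * (t ^ 2 - 1) := by linarith
      have ht2 : t ^ 2 - 1 ≥ 2 * s := by rw [ht]; nlinarith
      have hid : 3 * a 2 * s = -2 := by
        rw [hsdef, mul_div_assoc', div_eq_iff h32']; ring
      have hmul : 3 * a 2 * (t ^ 2 - 1) ≤ 3 * a 2 * (2 * s) :=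
        mul_le_mul_of_nonpos_left ht2 (le_of_lt h32)
      linarith [key, hmul, hid]
    -- a 3 = 0
    have ha3 : a 3 = 0 := by
      rcases lt_trichotomy (a 3) 0 with hc | hc | hc
      · exfalso
        have hc' : a 3 ≠ 0 := ne_of_lt hc
        obtain ⟨M, hM⟩ : ∃ M : ℝ, M = 3 + 12 / (-(a 3)) := ⟨_, rfl⟩
        have hM0 : 0 < 12 / (-(a 3)) := by
          apply div_pos (by norm_num); linarith
        have hM3 : 3 ≤ M := by rw [hM]; linarith
        have hMc : a 3 * M ≤ -12 := by
          have hx : a 3 * (12 / (-(a 3))) = -12 := by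
            rw [div_neg, mul_neg, mul_div_assoc', mul_comm, mul_div_assoc,
              div_self hc', mul_one]
          have hexp : a 3 * M = 3 * a 3 + a 3 * (12 / (-(a 3))) := by rw [hM]; ring
          linarith
        have h1 := h3 M
        have hM9 : 9 ≤ M ^ 2 := by nlinarith
        have hM2 : 0 ≤ M ^ 2 - 3 := by linarith
        have hM1 : 0 ≤ M ^ 2 - 1 := by linarith
        have hb : a 2 / 2 * 3 * (M ^ 2 - 1) ≤ M ^ 2 - 1 := by
          nlinarith [mul_nonneg (show (0:ℝ) ≤ 2 / 3 - a 2 by linarith) hM1]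
        have hcub : (a 3 * M) * (M ^ 2 - 3) ≤ -12 * (M ^ 2 - 3) :=
          mul_le_mul_of_nonneg_right hMc hM2
        nlinarith [h1, hb, hcub, hM9]
      · exact hc
      · exfalso
        have hc' : a 3 ≠ 0 := ne_of_gt hc
        obtain ⟨M, hM⟩ : ∃ M : ℝ, M = 3 + 12 / a 3 := ⟨_, rfl⟩
        have hM0 : 0 < 12 / a 3 := by positivity
        have hM3 : 3 ≤ M := by rw [hM]; linarith
        have hMc : 12 ≤ a 3 * M := by
          have hx : a 3 * (12 / a 3) = 12 := by field_simp
          have hexp : a 3 * M = 3 * a 3 + a 3 * (12 / a 3) := by rw [hM]; ring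
          linarith
        have h1 := h3 (-M)
        have hM9 : 9 ≤ M ^ 2 := by nlinarith
        have hM2 : 0 ≤ M ^ 2 - 3 := by linarith
        have hM1 : 0 ≤ M ^ 2 - 1 := by linarith
        have hb : a 2 / 2 * 3 * (M ^ 2 - 1) ≤ M ^ 2 - 1 := by
          nlinarith [mul_nonneg (show (0:ℝ) ≤ 2 / 3 - a 2 by linarith) hM1]
        have hcub : 12 * (M ^ 2 - 3) ≤ (a 3 * M) * (M ^ 2 - 3) :=
          mul_le_mul_of_nonneg_right hMc hM2
        nlinarith [h1, hb, hcub, hM9]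
    exact ⟨ha1, ha3, ha2l, ha2u⟩
  · rintro ⟨ha1, ha3, hl, hu⟩ y hy x
    interval_cases y
    · simp [lambdaA, hermiteR, ha0]
    · rw [lambdaA_one, ha0, ha1]; norm_num
    · rw [lambdaA_two, ha0, ha1]; nlinarith [sq_nonneg x]
    · rw [lambdaA_three, ha0, ha1, ha3]; nlinarith [sq_nonneg x]
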